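/- Let A_1,…,A_α be complete DFAs over a common alphabet Σ, where A_k has n_k ≥ 2 states and recognizes the language L_k. Then there exists a complete DFA with at most #T_α states recognizing the concatenation L_1·L_2···L_α; in particular the state complexity of L_1·L_2···L_α is at most #T_α. -/
import Mathlib


/-- The set `T_α` of valid sequences `(S_1,…,S_α)` (indexed here from `0`, with
`S k = ∅` for `k ≥ α`): each `S_k ⊆ {0,…,n_k−1}`, `S_0` is a singleton (P1),
`S_k = ∅` implies `S_{k+1} = ∅` (P2), and `n_k − 1 ∈ S_k` implies `0 ∈ S_{k+1}` (P3). -/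
def Tset (n : ℕ → ℕ) (α : ℕ) : Set (ℕ → Finset ℕ) :=
  {S | (∀ k, α ≤ k → S k = ∅) ∧
       (∀ k, k < α → S k ⊆ Finset.range (n k)) ∧
       (0 < α → (S 0).card = 1) ∧
       (∀ k, k + 1 < α → S k = ∅ → S (k + 1) = ∅) ∧
       (∀ k, k + 1 < α → n k - 1 ∈ S k → 0 ∈ S (k + 1))}

/-- The state complexity of a language: the least number of states of a complete DFA
(deterministic, with a total transition function, as in Mathlib's `DFA`) recognizing it. -/
noncomputable def sc {Sig : Type} (L : Language Sig) : ℕ :=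
  sInf {c | ∃ (Q : Type) (_ : Fintype Q) (D : DFA Sig Q), D.accepts = L ∧ Fintype.card Q = c}

namespace CatSC
variable {Sig : Type} {n : ℕ → ℕ}

lemma concat_split {w x v : List Sig} {a : Sig} (h : w ++ [a] = x ++ v) :
    (v = [] ∧ x = w ++ [a]) ∨ (∃ u, v = u ++ [a] ∧ w = x ++ u) := by
  rcases v.eq_nil_or_concat with rfl | ⟨u, b, rfl⟩
  · left; constructor
    · rfl
    · simpa using h.symm
  · right
    rw [List.concat_eq_append, ← List.append_assoc] at h
    have h2 := List.append_inj' h rfl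
    obtain ⟨h3, h4⟩ := h2
    obtain rfl : a = b := by simpa using h4
    exact ⟨u, by simp [List.concat_eq_append], h3⟩

section defs
variable (A : ∀ k : ℕ, DFA Sig (Fin (n k)))

open Classical in
noncomputable def acc (k : ℕ) : Finset (Fin (n k)) := Finset.univ.filter (· ∈ (A k).accept)

lemma mem_acc {k : ℕ} {q : Fin (n k)} : q ∈ acc A k ↔ q ∈ (A k).accept := by
  classical simp [acc]

noncomputable def casc (f : ∀ k : ℕ, Finset (Fin (n k))) : ∀ k : ℕ, Finset (Fin (n k))
  | 0 => f 0
  | (k+1) => f (k+1) ∪ (if ((casc f k) ∩ acc A k).Nonempty then {(A (k+1)).start} else ∅)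

lemma casc_congr {f f' : ∀ k : ℕ, Finset (Fin (n k))} :
    ∀ k : ℕ, (∀ j, j ≤ k → f j = f' j) → casc A f k = casc A f' k
  | 0, h => by simp [casc, h 0 le_rfl]
  | (k+1), h => by
      simp only [casc, h (k+1) le_rfl, casc_congr k (fun j hj => h j (hj.trans (Nat.le_succ k)))]

noncomputable def stepF (S : ∀ k : ℕ, Finset (Fin (n k))) (a : Sig) :
    ∀ k : ℕ, Finset (Fin (n k)) :=
  casc A (fun k => (S k).image (fun q => (A k).step q a))

noncomputable def startF : ∀ k : ℕ, Finset (Fin (n k)) :=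
  casc A (fun k => match k with | 0 => {(A 0).start} | (_+1) => ∅)

noncomputable def T (w : List Sig) : ∀ k : ℕ, Finset (Fin (n k)) :=
  w.foldl (stepF A) (startF A)

lemma T_nil : T A ([] : List Sig) = startF A := rfl

lemma T_append_singleton (w : List Sig) (a : Sig) :
    T A (w ++ [a]) = stepF A (T A w) a := by
  simp [T, List.foldl_append]

/-- the product of the first `k` languages -/
def P (k : ℕ) : Language Sig := ((List.range k).map fun i => (A i).accepts).prod

lemma P_zero : P A 0 = 1 := rfl

lemma P_succ (k : ℕ) : P A (k+1) = P A k * (A k).accepts := by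
  simp [P, List.range_succ]

lemma mem_P_succ {k : ℕ} {x : List Sig} :
    x ∈ P A (k+1) ↔ ∃ y ∈ P A k, ∃ z ∈ (A k).accepts, y ++ z = x := by
  rw [P_succ]; exact Language.mem_mul

lemma startF_zero : startF A 0 = {(A 0).start} := rfl

lemma startF_succ (k : ℕ) : startF A (k+1) =
    (if ((startF A k) ∩ acc A k).Nonempty then {(A (k+1)).start} else ∅) := by
  have h : startF A (k+1) = ∅ ∪ (if ((startF A k) ∩ acc A k).Nonempty
      then {(A (k+1)).start} else ∅) := rfl
  rw [h, Finset.empty_union]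

lemma stepF_zero (S : ∀ k : ℕ, Finset (Fin (n k))) (a : Sig) :
    stepF A S a 0 = (S 0).image (fun q => (A 0).step q a) := rfl

lemma stepF_succ (S : ∀ k : ℕ, Finset (Fin (n k))) (a : Sig) (k : ℕ) :
    stepF A S a (k+1) = ((S (k+1)).image (fun q => (A (k+1)).step q a)) ∪
      (if ((stepF A S a k) ∩ acc A k).Nonempty then {(A (k+1)).start} else ∅) := rfl

lemma mem_startF : ∀ (k : ℕ) (q : Fin (n k)),
    q ∈ startF A k ↔ ([] ∈ P A k ∧ q = (A k).start)
  | 0, q => by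
      rw [startF_zero]
      simp [P_zero, Language.nil_mem_one]
  | (k+1), q => by
      have hs : ((startF A k ∩ acc A k).Nonempty ↔ [] ∈ P A (k+1)) := by
        constructor
        · rintro ⟨p, hp⟩
          rw [Finset.mem_inter] at hp
          obtain ⟨hp1, hp2⟩ := hp
          obtain ⟨h1, rfl⟩ := (mem_startF k p).1 hp1
          refine (mem_P_succ A).2 ⟨[], h1, [], ?_, rfl⟩
          rw [DFA.mem_accepts, DFA.eval_nil]
          exact (mem_acc A).1 hp2
        · intro h
          obtain ⟨y, hy, z, hz, hyz⟩ := (mem_P_succ A).1 h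
          obtain ⟨rfl, rfl⟩ := List.append_eq_nil_iff.1 hyz
          refine ⟨(A k).start, Finset.mem_inter.2 ⟨(mem_startF k _).2 ⟨hy, rfl⟩, ?_⟩⟩
          rw [mem_acc]
          rw [DFA.mem_accepts, DFA.eval_nil] at hz
          exact hz
      rw [startF_succ]
      by_cases hc : (startF A k ∩ acc A k).Nonempty
      · simp only [if_pos hc, Finset.mem_singleton]
        exact ⟨fun h => ⟨hs.1 hc, h⟩, fun h => h.2⟩
      · simp only [if_neg hc, Finset.notMem_empty, false_iff, not_and]
        intro h
        exact absurd (hs.2 h) hc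

theorem mem_T (w : List Sig) : ∀ (k : ℕ) (q : Fin (n k)),
    q ∈ T A w k ↔ ∃ x v, x ∈ P A k ∧ (A k).eval v = q ∧ x ++ v = w := by
  induction w using List.reverseRecOn with
  | nil =>
      intro k q
      rw [T_nil, mem_startF]
      constructor
      · rintro ⟨h1, rfl⟩
        exact ⟨[], [], h1, rfl, rfl⟩
      · rintro ⟨x, v, hx, rfl, hxv⟩
        obtain ⟨rfl, rfl⟩ := List.append_eq_nil_iff.1 hxv
        exact ⟨hx, rfl⟩
  | append_singleton w a IH =>
      intro k
      induction k with
      | zero =>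
          intro q
          rw [T_append_singleton, stepF_zero]
          constructor
          · intro hq
            obtain ⟨p, hp, rfl⟩ := Finset.mem_image.1 hq
            obtain ⟨x, v, hx, rfl, hxv⟩ := (IH 0 p).1 hp
            exact ⟨x, v ++ [a], hx, by rw [DFA.eval_append_singleton],
              by rw [← List.append_assoc, hxv]⟩
          · rintro ⟨x, v, hx, rfl, hxv⟩
            rw [P_zero, Language.mem_one] at hx
            subst hx
            rcases concat_split hxv.symm with ⟨rfl, h2⟩ | ⟨u, rfl, h2⟩
            · simp at h2
            · refine Finset.mem_image.2 ⟨(A 0).eval u, (IH 0 _).2 ⟨[], u, ?_, rfl, by simpa using h2.symm⟩,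
                by rw [← DFA.eval_append_singleton]⟩
              rw [P_zero]; exact Language.nil_mem_one
      | succ k IHk =>
          have hseed : ((T A (w ++ [a]) k ∩ acc A k).Nonempty ↔ (w ++ [a]) ∈ P A (k+1)) := by
            constructor
            · rintro ⟨p, hp⟩
              rw [Finset.mem_inter] at hp
              obtain ⟨hp1, hp2⟩ := hp
              obtain ⟨x, v, hx, hv, hxv⟩ := (IHk p).1 hp1
              refine (mem_P_succ A).2 ⟨x, hx, v, ?_, hxv⟩
              rw [DFA.mem_accepts, hv]
              exact (mem_acc A).1 hp2
            · intro h
              obtain ⟨y, hy, z, hz, hyz⟩ := (mem_P_succ A).1 h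
              refine ⟨(A k).eval z, Finset.mem_inter.2 ⟨(IHk _).2 ⟨y, z, hy, rfl, hyz⟩, ?_⟩⟩
              rw [mem_acc]
              rw [DFA.mem_accepts] at hz
              exact hz
          intro q
          rw [T_append_singleton] at hseed ⊢
          rw [stepF_succ, Finset.mem_union]
          constructor
          · intro hq
            rcases hq with hq | hq
            · obtain ⟨p, hp, rfl⟩ := Finset.mem_image.1 hq
              obtain ⟨x, v, hx, rfl, hxv⟩ := (IH (k+1) p).1 hp
              exact ⟨x, v ++ [a], hx, by rw [DFA.eval_append_singleton],
                by rw [← List.append_assoc, hxv]⟩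
            · by_cases hc : ((stepF A (T A w) a k ∩ acc A k).Nonempty)
              · rw [if_pos hc] at hq
                rw [Finset.mem_singleton] at hq
                subst hq
                exact ⟨w ++ [a], [], hseed.1 hc, rfl, List.append_nil _⟩
              · rw [if_neg hc] at hq
                exact absurd hq (Finset.notMem_empty _)
          · rintro ⟨x, v, hx, rfl, hxv⟩
            rcases concat_split hxv.symm with ⟨rfl, rfl⟩ | ⟨u, rfl, h2⟩
            · right
              rw [if_pos (hseed.2 hx), Finset.mem_singleton]
              rfl
            · left
              exact Finset.mem_image.2 ⟨(A (k+1)).eval u,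
                (IH (k+1) _).2 ⟨x, u, hx, rfl, h2.symm⟩,
                by rw [← DFA.eval_append_singleton]⟩

lemma T_inter_acc (w : List Sig) (k : ℕ) :
    ((T A w k ∩ acc A k).Nonempty ↔ w ∈ P A (k+1)) := by
  constructor
  · rintro ⟨p, hp⟩
    rw [Finset.mem_inter] at hp
    obtain ⟨hp1, hp2⟩ := hp
    obtain ⟨x, v, hx, hv, hxv⟩ := (mem_T A w k p).1 hp1
    refine (mem_P_succ A).2 ⟨x, hx, v, ?_, hxv⟩
    rw [DFA.mem_accepts, hv]
    exact (mem_acc A).1 hp2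
  · intro h
    obtain ⟨y, hy, z, hz, hyz⟩ := (mem_P_succ A).1 h
    refine ⟨(A k).eval z, Finset.mem_inter.2 ⟨(mem_T A w k _).2 ⟨y, z, hy, rfl, hyz⟩, ?_⟩⟩
    rw [mem_acc]
    rw [DFA.mem_accepts] at hz
    exact hz

variable (α : ℕ)

def emb (S : ∀ k : Fin α, Finset (Fin (n k.1))) : ∀ k : ℕ, Finset (Fin (n k)) :=
  fun k => if h : k < α then S ⟨k, h⟩ else ∅

noncomputable def D (hα : 0 < α) : DFA Sig (∀ k : Fin α, Finset (Fin (n k.1))) where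
  step := fun S a k => stepF A (emb α S) a k.1
  start := fun k => startF A k.1
  accept := {S | (S ⟨α-1, by omega⟩ ∩ acc A (α-1)).Nonempty}

lemma D_step (hα : 0 < α) (S : ∀ k : Fin α, Finset (Fin (n k.1)))
    (F : ∀ k : ℕ, Finset (Fin (n k))) (hSF : ∀ k : Fin α, S k = F k.1) (a : Sig) (k : Fin α) :
    (D A α hα).step S a k = stepF A F a k.1 := by
  show stepF A (emb α S) a k.1 = stepF A F a k.1
  unfold stepF
  apply casc_congr
  intro j hj
  have hjα : j < α := lt_of_le_of_lt hj k.2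
  have : emb α S j = F j := by
    rw [emb, dif_pos hjα, hSF ⟨j, hjα⟩]
  rw [this]

lemma D_eval (hα : 0 < α) (w : List Sig) : ∀ k : Fin α, (D A α hα).eval w k = T A w k.1 := by
  induction w using List.reverseRecOn with
  | nil => intro k; rfl
  | append_singleton w a IH =>
      intro k
      rw [DFA.eval_append_singleton, T_append_singleton]
      exact D_step A α hα _ _ IH a k

lemma D_accepts (hα : 0 < α) : (D A α hα).accepts = P A α := by
  ext w
  rw [DFA.mem_accepts]
  show ((D A α hα).eval w ⟨α-1, by omega⟩ ∩ acc A (α-1)).Nonempty ↔ _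
  rw [D_eval A α hα w ⟨α-1, by omega⟩]
  rw [T_inter_acc]
  have : α - 1 + 1 = α := by omega
  rw [this]

noncomputable def Dr (hα : 0 < α) :
    DFA Sig {S : ∀ k : Fin α, Finset (Fin (n k.1)) // ∃ w, (D A α hα).eval w = S} where
  step := fun S a => ⟨(D A α hα).step S.1 a, by
    obtain ⟨w, hw⟩ := S.2
    exact ⟨w ++ [a], by rw [DFA.eval_append_singleton, hw]⟩⟩
  start := ⟨(D A α hα).start, ⟨[], rfl⟩⟩
  accept := {S | S.1 ∈ (D A α hα).accept}

lemma Dr_evalFrom (hα : 0 < α) : ∀ (w : List Sig)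
    (S : {S : ∀ k : Fin α, Finset (Fin (n k.1)) // ∃ w, (D A α hα).eval w = S}),
    ((Dr A α hα).evalFrom S w).1 = (D A α hα).evalFrom S.1 w
  | [], S => rfl
  | (a :: w), S => by
      rw [DFA.evalFrom, DFA.evalFrom, List.foldl_cons, List.foldl_cons]
      exact Dr_evalFrom hα w _

lemma Dr_accepts (hα : 0 < α) : (Dr A α hα).accepts = (D A α hα).accepts := by
  ext w
  rw [DFA.mem_accepts, DFA.mem_accepts]
  show (Dr A α hα).evalFrom (Dr A α hα).start w ∈ _ ↔ _
  have h := Dr_evalFrom A α hα w (Dr A α hα).start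
  constructor
  · intro hw
    have h2 : ((Dr A α hα).evalFrom (Dr A α hα).start w).1 ∈ (D A α hα).accept := hw
    rw [h] at h2
    exact h2
  · intro hw
    show ((Dr A α hα).evalFrom (Dr A α hα).start w).1 ∈ (D A α hα).accept
    rw [h]
    exact hw

/-- invariants of reachable states -/
structure GoodF (α : ℕ) (F : ∀ k : ℕ, Finset (Fin (n k))) : Prop where
  g1 : 0 < α → (F 0).card = 1
  g2 : ∀ k, k < α → F k = ∅ → F (k+1) = ∅
  g3 : ∀ k, k + 1 < α → ∀ q, q ∈ F k → q ∈ (A k).accept → (A (k+1)).start ∈ F (k+1)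
  g4 : ∀ k, k < α → acc A k = ∅ → F (k+1) = ∅

lemma T_zero_eq (w : List Sig) : T A w 0 = {(A 0).eval w} := by
  ext q
  rw [mem_T, Finset.mem_singleton]
  constructor
  · rintro ⟨x, v, hx, rfl, hxv⟩
    rw [P_zero, Language.mem_one] at hx
    subst hx
    rw [List.nil_append] at hxv
    rw [hxv]
  · rintro rfl
    exact ⟨[], w, by rw [P_zero]; exact Language.nil_mem_one, rfl, rfl⟩

lemma goodF_T (w : List Sig) (α : ℕ) : GoodF A α (T A w) := by
  constructor
  · intro _
    rw [T_zero_eq]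
    exact Finset.card_singleton _
  · intro k _ hk
    by_contra hne
    obtain ⟨q, hq⟩ := Finset.nonempty_iff_ne_empty.2 hne
    obtain ⟨x, v, hx, hv, hxv⟩ := (mem_T A w (k+1) q).1 hq
    obtain ⟨y, hy, z, hz, hyz⟩ := (mem_P_succ A).1 hx
    have : (A k).eval (z ++ v) ∈ T A w k := by
      refine (mem_T A w k _).2 ⟨y, z ++ v, hy, rfl, ?_⟩
      rw [← List.append_assoc, hyz, hxv]
    rw [hk] at this
    exact Finset.notMem_empty _ this
  · intro k _ q hq hacc
    obtain ⟨x, v, hx, hv, hxv⟩ := (mem_T A w k q).1 hq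
    refine (mem_T A w (k+1) _).2 ⟨x ++ v, [], ?_, ?_, by rw [List.append_nil, hxv]⟩
    · refine (mem_P_succ A).2 ⟨x, hx, v, ?_, rfl⟩
      rw [DFA.mem_accepts, hv]
      exact hacc
    · exact DFA.eval_nil _
  · intro k _ hk
    by_contra hne
    obtain ⟨q, hq⟩ := Finset.nonempty_iff_ne_empty.2 hne
    obtain ⟨x, v, hx, hv, hxv⟩ := (mem_T A w (k+1) q).1 hq
    obtain ⟨y, hy, z, hz, hyz⟩ := (mem_P_succ A).1 hx
    rw [DFA.mem_accepts] at hz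
    have : (A k).eval z ∈ acc A k := (mem_acc A).2 hz
    rw [hk] at this
    exact Finset.notMem_empty _ this

section inj
variable (α : ℕ) (hn : ∀ i, i < α → 2 ≤ n i)

noncomputable def phiA (k : ℕ) (hk : k < α) : Fin (n k) ≃ Fin (n k) :=
  Equiv.swap ((A k).start) ⟨0, by have := hn k hk; omega⟩

noncomputable def gel (k : ℕ) : Fin (n k) :=
  if h : (acc A k).Nonempty then h.choose else (A k).start

noncomputable def phiB (k : ℕ) (hk : k < α) : Fin (n k) ≃ Fin (n k) :=
  (phiA A α hn k hk).trans
    (Equiv.swap ((phiA A α hn k hk) (gel A k)) ⟨n k - 1, by have := hn k hk; omega⟩)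

noncomputable def toN (k : ℕ) (e : Fin (n k) ≃ Fin (n k)) : Fin (n k) ↪ ℕ :=
  e.toEmbedding.trans ⟨Fin.val, Fin.val_injective⟩

open Classical in
noncomputable def Phi (F : ∀ k : ℕ, Finset (Fin (n k))) (k : ℕ) : Finset ℕ :=
  if hk : k < α then
    if 0 < k ∧ acc A (k-1) = ∅ then (if F (k-1) = ∅ then (∅ : Finset ℕ) else {0})
    else (F k).map (toN k
      (if (k + 1 < α → (0:ℕ) ∈ Phi F (k+1)) then phiA A α hn k hk else phiB A α hn k hk))
  else ∅
termination_by α - k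
decreasing_by all_goals omega

variable {A α}

lemma Phi_ge (F : ∀ k : ℕ, Finset (Fin (n k))) (k : ℕ) (hk : α ≤ k) :
    Phi A α hn F k = ∅ := by
  rw [Phi]; exact dif_neg (by omega)

lemma Phi_pad (F : ∀ k : ℕ, Finset (Fin (n k))) (k : ℕ) (hk : k < α) (h1 : 0 < k)
    (h2 : acc A (k-1) = ∅) :
    Phi A α hn F k = if F (k-1) = ∅ then ∅ else {0} := by
  rw [Phi, dif_pos hk, if_pos ⟨h1, h2⟩]

lemma Phi_map (F : ∀ k : ℕ, Finset (Fin (n k))) (k : ℕ) (hk : k < α)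
    (h2 : ¬(0 < k ∧ acc A (k-1) = ∅)) :
    Phi A α hn F k = (F k).map (toN k
      (if (k + 1 < α → (0:ℕ) ∈ Phi A α hn F (k+1)) then phiA A α hn k hk
       else phiB A α hn k hk)) := by
  rw [Phi, dif_pos hk, if_neg h2]

lemma mem_map_toN {k : ℕ} {s : Finset (Fin (n k))} {e : Fin (n k) ≃ Fin (n k)} {x : ℕ} :
    x ∈ s.map (toN k e) ↔ ∃ q ∈ s, ((e q : Fin (n k)) : ℕ) = x := by
  simp [toN, Finset.mem_map, Function.Embedding.trans]

lemma zero_ne_phiA_last {k : ℕ} (hk : k < α) :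
    (⟨0, by have := hn k hk; omega⟩ : Fin (n k)) ≠ ⟨n k - 1, by have := hn k hk; omega⟩ := by
  intro h
  have := hn k hk
  have h2 := congrArg Fin.val h
  simp at h2
  omega

lemma phiA_start {k : ℕ} (hk : k < α) :
    phiA A α hn k hk ((A k).start) = ⟨0, by have := hn k hk; omega⟩ :=
  Equiv.swap_apply_left _ _

lemma phiA_eq_zero_iff {k : ℕ} (hk : k < α) (q : Fin (n k)) :
    phiA A α hn k hk q = ⟨0, by have := hn k hk; omega⟩ ↔ q = (A k).start := by
  rw [← phiA_start hn hk]
  exact ⟨fun h => (phiA A α hn k hk).injective h, fun h => by rw [h]⟩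

lemma gel_mem {k : ℕ} (hacc : (acc A k).Nonempty) : gel A k ∈ acc A k := by
  rw [gel, dif_pos hacc]
  exact hacc.choose_spec

lemma start_mem_Phi (F : ∀ k : ℕ, Finset (Fin (n k))) (hF : GoodF A α F) :
    ∀ (d k : ℕ), α - k ≤ d → ∀ (hk : k < α), (A k).start ∈ F k →
      (0:ℕ) ∈ Phi A α hn F k := by
  intro d
  induction d with
  | zero => intro k hd hk; omega
  | succ d IH =>
    intro k hd hk hs
    by_cases hpad : 0 < k ∧ acc A (k-1) = ∅
    · exfalso
      have h4 := hF.g4 (k-1) (by omega) hpad.2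
      rw [show k - 1 + 1 = k by omega] at h4
      rw [h4] at hs
      exact Finset.notMem_empty _ hs
    · rw [Phi_map hn F k hk hpad]
      by_cases hb : (k + 1 < α → (0:ℕ) ∈ Phi A α hn F (k+1))
      · rw [if_pos hb]
        exact mem_map_toN.2 ⟨(A k).start, hs, by rw [phiA_start hn hk]⟩
      · rw [if_neg hb]
        push_neg at hb
        obtain ⟨hb1, hb2⟩ := hb
        by_cases hg : gel A k = (A k).start
        · exfalso
          by_cases hacc : (acc A k).Nonempty
          · have hge : (A k).start ∈ (A k).accept :=
              (mem_acc A).1 (hg ▸ gel_mem hacc)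
            have h5 := hF.g3 k hb1 _ hs hge
            exact hb2 (IH (k+1) (by omega) hb1 h5)
          · have hacc' : acc A k = ∅ := Finset.not_nonempty_iff_eq_empty.1 hacc
            have hp := Phi_pad hn F (k+1) hb1 (Nat.succ_pos _) (by simpa using hacc')
            rw [hp] at hb2
            have hb2' : (0:ℕ) ∉ (if F k = ∅ then (∅ : Finset ℕ) else {0}) := hb2
            rw [if_neg (fun he => Finset.notMem_empty _ (he ▸ hs))] at hb2'
            simp at hb2'
        · refine mem_map_toN.2 ⟨(A k).start, hs, ?_⟩
          show ((Equiv.trans _ _) ((A k).start) : Fin (n k)).val = 0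
          rw [Equiv.trans_apply, phiA_start hn hk]
          rw [Equiv.swap_apply_of_ne_of_ne]
          · intro h
            exact hg (((phiA_eq_zero_iff hn hk _).1 h.symm).symm ▸ rfl)
          · exact zero_ne_phiA_last hn hk

lemma F_empty_of_Phi_empty (F : ∀ k : ℕ, Finset (Fin (n k))) (hF : GoodF A α F)
    (k : ℕ) (hk : k < α) (h : Phi A α hn F k = ∅) : F k = ∅ := by
  by_cases hpad : 0 < k ∧ acc A (k-1) = ∅
  · rw [Phi_pad hn F k hk hpad.1 hpad.2] at h
    by_cases he : F (k-1) = ∅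
    · have h2 := hF.g2 (k-1) (by omega) he
      rw [show k - 1 + 1 = k by omega] at h2
      exact h2
    · rw [if_neg he] at h
      exact absurd h (by simp)
  · rw [Phi_map hn F k hk hpad] at h
    exact Finset.map_eq_empty.1 h

lemma Phi_nonzero_imp (F : ∀ k : ℕ, Finset (Fin (n k))) (hF : GoodF A α F)
    (k : ℕ) (hk : k < α) (hx : n k - 1 ∈ Phi A α hn F k) (hk1 : k + 1 < α) :
    (0:ℕ) ∈ Phi A α hn F (k+1) := by
  by_cases hpad : 0 < k ∧ acc A (k-1) = ∅
  · rw [Phi_pad hn F k hk hpad.1 hpad.2] at hx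
    exfalso
    by_cases he : F (k-1) = ∅
    · rw [if_pos he] at hx
      exact Finset.notMem_empty _ hx
    · rw [if_neg he] at hx
      rw [Finset.mem_singleton] at hx
      have := hn k hk
      omega
  · rw [Phi_map hn F k hk hpad] at hx
    by_cases hb : (k + 1 < α → (0:ℕ) ∈ Phi A α hn F (k+1))
    · exact hb hk1
    · rw [if_neg hb] at hx
      obtain ⟨q, hq, hqv⟩ := mem_map_toN.1 hx
      -- q = gel A k
      have hlast : (phiB A α hn k hk) q = ⟨n k - 1, by have := hn k hk; omega⟩ :=
        Fin.ext hqv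
      have hq_gel : q = gel A k := by
        apply (phiB A α hn k hk).injective
        rw [hlast]
        show _ = (Equiv.trans _ _) (gel A k)
        rw [Equiv.trans_apply]
        rw [Equiv.swap_apply_left]
      rw [hq_gel] at hq
      by_cases hacc : (acc A k).Nonempty
      · have hge : gel A k ∈ (A k).accept := (mem_acc A).1 (gel_mem hacc)
        have h5 := hF.g3 k hk1 _ hq hge
        exact start_mem_Phi hn F hF (α - (k+1)) (k+1) le_rfl hk1 h5
      · have hacc' : acc A k = ∅ := Finset.not_nonempty_iff_eq_empty.1 hacc
        rw [Phi_pad hn F (k+1) hk1 (Nat.succ_pos _) (by simpa using hacc')]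
        have hne : ¬ F (k+1-1) = ∅ := fun he => Finset.notMem_empty _ (he ▸ hq)
        rw [if_neg hne]
        simp

lemma Phi_mem_Tset (F : ∀ k : ℕ, Finset (Fin (n k))) (hF : GoodF A α F) (hα : 0 < α) :
    Phi A α hn F ∈ Tset n α := by
  refine ⟨fun k hk => Phi_ge hn F k hk, ?_, ?_, ?_, ?_⟩
  · intro k hk x hx
    rw [Finset.mem_range]
    by_cases hpad : 0 < k ∧ acc A (k-1) = ∅
    · rw [Phi_pad hn F k hk hpad.1 hpad.2] at hx
      have := hn k hk
      by_cases he : F (k-1) = ∅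
      · rw [if_pos he] at hx
        exact absurd hx (Finset.notMem_empty _)
      · rw [if_neg he, Finset.mem_singleton] at hx
        omega
    · rw [Phi_map hn F k hk hpad] at hx
      obtain ⟨q, _, hqv⟩ := mem_map_toN.1 hx
      rw [← hqv]
      exact Fin.is_lt _
  · intro _
    have hpad : ¬(0 < 0 ∧ acc A (0-1) = ∅) := by simp
    rw [Phi_map hn F 0 hα hpad, Finset.card_map]
    exact hF.g1 hα
  · intro k hk1 h
    have hFk : F k = ∅ := F_empty_of_Phi_empty hn F hF k (by omega) h
    by_cases hpad : 0 < k + 1 ∧ acc A ((k+1)-1) = ∅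
    · rw [Phi_pad hn F (k+1) hk1 hpad.1 hpad.2]
      rw [if_pos (by simpa using hFk)]
    · rw [Phi_map hn F (k+1) hk1 hpad]
      rw [hF.g2 k (by omega) hFk]
      rfl
  · intro k hk1 hx
    exact Phi_nonzero_imp hn F hF k (by omega) hx hk1

lemma Phi_inj (F1 F2 : ∀ k : ℕ, Finset (Fin (n k))) (hF1 : GoodF A α F1)
    (hF2 : GoodF A α F2) (h : Phi A α hn F1 = Phi A α hn F2) :
    ∀ k, k < α → F1 k = F2 k := by
  intro k hk
  have hk' := congrFun h k
  by_cases hpad : 0 < k ∧ acc A (k-1) = ∅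
  · have e1 := hF1.g4 (k-1) (by omega) hpad.2
    have e2 := hF2.g4 (k-1) (by omega) hpad.2
    rw [show k - 1 + 1 = k by omega] at e1 e2
    rw [e1, e2]
  · rw [Phi_map hn F1 k hk hpad, Phi_map hn F2 k hk hpad] at hk'
    have hbeq : (k + 1 < α → (0:ℕ) ∈ Phi A α hn F1 (k+1)) ↔
        (k + 1 < α → (0:ℕ) ∈ Phi A α hn F2 (k+1)) := by rw [h]
    by_cases hb : (k + 1 < α → (0:ℕ) ∈ Phi A α hn F1 (k+1))
    · rw [if_pos hb, if_pos (hbeq.1 hb)] at hk'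
      exact Finset.map_injective _ hk'
    · rw [if_neg hb, if_neg (fun hh => hb (hbeq.2 hh))] at hk'
      exact Finset.map_injective _ hk'

end inj

lemma emb_lt {α : ℕ} (S : ∀ k : Fin α, Finset (Fin (n k.1))) {k : ℕ} (hk : k < α) :
    emb α S k = S ⟨k, hk⟩ := dif_pos hk

lemma emb_ge {α : ℕ} (S : ∀ k : Fin α, Finset (Fin (n k.1))) {k : ℕ} (hk : ¬ k < α) :
    emb α S k = ∅ := dif_neg hk

lemma emb_eval (α : ℕ) (hα : 0 < α) (w : List Sig) {k : ℕ} (hk : k < α) :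
    emb α ((D A α hα).eval w) k = T A w k := by
  rw [emb_lt _ hk, D_eval A α hα w ⟨k, hk⟩]

lemma goodF_emb (α : ℕ) (hα : 0 < α) (w : List Sig) :
    GoodF A α (emb α ((D A α hα).eval w)) := by
  have hT := goodF_T A w α
  constructor
  · intro h
    rw [emb_eval A α hα w hα]
    exact hT.g1 h
  · intro k hk he
    by_cases hk1 : k + 1 < α
    · rw [emb_eval A α hα w hk1]
      rw [emb_eval A α hα w hk] at he
      exact hT.g2 k hk he
    · exact emb_ge _ hk1
  · intro k hk1 q hq hacc
    rw [emb_eval A α hα w hk1]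
    rw [emb_eval A α hα w (by omega : k < α)] at hq
    exact hT.g3 k hk1 q hq hacc
  · intro k hk he
    by_cases hk1 : k + 1 < α
    · rw [emb_eval A α hα w hk1]
      exact hT.g4 k hk he
    · exact emb_ge _ hk1

end defs

section finiteness
variable (n : ℕ → ℕ) (α : ℕ)

lemma Tset_finite : (Tset n α).Finite := by
  have hJ : Set.InjOn (fun (S : ℕ → Finset ℕ) (k : Fin α) =>
      Finset.univ.filter (fun q : Fin (n k.1) => (q : ℕ) ∈ S k.1)) (Tset n α) := by
    intro S1 h1 S2 h2 h
    funext j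
    by_cases hj : j < α
    · ext x
      constructor
      · intro hx
        have hlt : x < n j := Finset.mem_range.1 (h1.2.1 j hj hx)
        have hj' := congrFun h ⟨j, hj⟩
        simp only at hj'
        have hm : (⟨x, hlt⟩ : Fin (n j)) ∈ Finset.univ.filter
            (fun q : Fin (n j) => (q : ℕ) ∈ S1 j) := by
          simp [hx]
        rw [hj'] at hm
        simpa using hm
      · intro hx
        have hlt : x < n j := Finset.mem_range.1 (h2.2.1 j hj hx)
        have hj' := congrFun h ⟨j, hj⟩
        simp only at hj'
        have hm : (⟨x, hlt⟩ : Fin (n j)) ∈ Finset.univ.filter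
            (fun q : Fin (n j) => (q : ℕ) ∈ S2 j) := by
          simp [hx]
        rw [← hj'] at hm
        simpa using hm
    · rw [h1.1 j (by omega), h2.1 j (by omega)]
  exact Set.Finite.of_finite_image (Set.toFinite _) hJ

end finiteness
end CatSC


open CatSC

/-- If `A_1,…,A_α` are complete DFAs over a common alphabet, where `A_k` has `n_k ≥ 2`
states, then there is a complete DFA with at most `#T_α` states recognizing the
concatenation `L(A_1)·L(A_2)···L(A_α)`; in particular
`sc(L(A_1)·L(A_2)···L(A_α)) ≤ #T_α`. -/
theorem catenation_state_complexity_le (Sig : Type) (α : ℕ) (hα : 1 ≤ α)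
    (n : ℕ → ℕ) (hn : ∀ i, i < α → 2 ≤ n i) (A : ∀ k : ℕ, DFA Sig (Fin (n k))) :
    (∃ (Q : Type) (_ : Fintype Q) (D : DFA Sig Q),
      D.accepts = ((List.range α).map fun k => (A k).accepts).prod ∧
      Fintype.card Q ≤ (Tset n α).ncard) ∧
    sc (((List.range α).map fun k => (A k).accepts).prod) ≤ (Tset n α).ncard := by
  have hα0 : 0 < α := hα
  classical
  set Q := {S : ∀ k : Fin α, Finset (Fin (n k.1)) // ∃ w, (D A α hα0).eval w = S} with hQ
  haveI : Fintype Q := Fintype.ofFinite Q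
  haveI : Finite ↥(Tset n α) := (Tset_finite n α).to_subtype
  have haccepts : (Dr A α hα0).accepts =
      ((List.range α).map fun k => (A k).accepts).prod := by
    rw [Dr_accepts, D_accepts]
    rfl
  have hcard : Fintype.card Q ≤ (Tset n α).ncard := by
    have hf : Function.Injective (fun S : Q =>
        (⟨Phi A α hn (emb α S.1), by
          obtain ⟨w, hw⟩ := S.2
          exact Phi_mem_Tset hn _ (hw ▸ goodF_emb A α hα0 w) hα0⟩ : ↥(Tset n α))) := by
      intro S1 S2 h
      have h' : Phi A α hn (emb α S1.1) = Phi A α hn (emb α S2.1) :=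
        congrArg Subtype.val h
      obtain ⟨w1, hw1⟩ := S1.2
      obtain ⟨w2, hw2⟩ := S2.2
      have hinj := Phi_inj hn _ _ (hw1 ▸ goodF_emb A α hα0 w1)
        (hw2 ▸ goodF_emb A α hα0 w2) h'
      apply Subtype.ext
      funext k
      have := hinj k.1 k.2
      rw [emb_lt _ k.2, emb_lt _ k.2] at this
      simpa using this
    calc Fintype.card Q = Nat.card Q := Nat.card_eq_fintype_card.symm
      _ ≤ Nat.card ↥(Tset n α) := Nat.card_le_card_of_injective _ hf
      _ = (Tset n α).ncard := Nat.card_coe_set_eq _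
  refine ⟨⟨Q, inferInstance, Dr A α hα0, haccepts, hcard⟩, ?_⟩
  exact le_trans (Nat.sInf_le ⟨Q, inferInstance, Dr A α hα0, haccepts, rfl⟩) hcard
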